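/- Let N, k, ℓ be integers with 0 ≤ ℓ < k ≤ N − 1. Then the inequality C(N+1−k,2)·(−2/(N+1−k)) + (C(N+1−ℓ,2) − C(N+1−k,2)) · (−2/(N+2)) · ((k+1)N + 2k)/(2(k+1)N − k(k−1)) > −(N − ℓ) is equivalent to (kℓ + ℓ + k + 3)N + 2kℓ > 0, and hence always holds. -/

import Mathlib

theorem stmt_8 (N k l : ℕ) (hl : l < k) (hk : k ≤ N - 1) (hN : 1 ≤ N) :
    ((((N + 1 - k).choose 2 : ℚ) * (-2 / ((N : ℚ) + 1 - k)) +
        (((N + 1 - l).choose 2 : ℚ) - ((N + 1 - k).choose 2 : ℚ)) * (-2 / ((N : ℚ) + 2)) *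
          (((k : ℚ) + 1) * N + 2 * k) / (2 * ((k : ℚ) + 1) * N - k * (k - 1))
        > -((N : ℚ) - l))
      ↔ ((k : ℚ) * l + l + k + 3) * N + 2 * k * l > 0) ∧
    (((N + 1 - k).choose 2 : ℚ) * (-2 / ((N : ℚ) + 1 - k)) +
        (((N + 1 - l).choose 2 : ℚ) - ((N + 1 - k).choose 2 : ℚ)) * (-2 / ((N : ℚ) + 2)) *
          (((k : ℚ) + 1) * N + 2 * k) / (2 * ((k : ℚ) + 1) * N - k * (k - 1))
        > -((N : ℚ) - l)) := by
  have hkN : k ≤ N := le_trans hk (Nat.sub_le N 1)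
  have hlN : l ≤ N := le_trans (le_of_lt hl) hkN
  have hkq : (k : ℚ) ≤ N := by exact_mod_cast hkN
  have hlq : (l : ℚ) < k := by exact_mod_cast hl
  have hlq0 : (0 : ℚ) ≤ l := Nat.cast_nonneg l
  have hkq0 : (0 : ℚ) ≤ k := Nat.cast_nonneg k
  have hNq : (1 : ℚ) ≤ N := by exact_mod_cast hN
  have h1 : (0 : ℚ) < (N : ℚ) + 1 - k := by linarith
  have h2 : (0 : ℚ) < (N : ℚ) + 2 := by linarith
  have hD : (0 : ℚ) < 2 * ((k : ℚ) + 1) * N - k * (k - 1) := by nlinarith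
  have hRHS : ((k : ℚ) * l + l + k + 3) * N + 2 * k * l > 0 := by
    nlinarith [mul_nonneg hkq0 hlq0, mul_nonneg (mul_nonneg hkq0 hlq0) (show (0:ℚ) ≤ (N:ℚ)-1 by linarith), mul_nonneg (add_nonneg (add_nonneg hkq0 hlq0) (by norm_num : (0:ℚ) ≤ 3)) (show (0:ℚ) ≤ (N:ℚ)-1 by linarith)]
  have hc1 : ((N + 1 - k : ℕ) : ℚ) = (N : ℚ) + 1 - k := by
    have : k ≤ N + 1 := le_trans hkN (Nat.le_succ N)
    push_cast [Nat.cast_sub this]; ring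
  have hc2 : ((N + 1 - l : ℕ) : ℚ) = (N : ℚ) + 1 - l := by
    have : l ≤ N + 1 := le_trans hlN (Nat.le_succ N)
    push_cast [Nat.cast_sub this]; ring
  have hineq : (((N + 1 - k).choose 2 : ℚ) * (-2 / ((N : ℚ) + 1 - k)) +
        (((N + 1 - l).choose 2 : ℚ) - ((N + 1 - k).choose 2 : ℚ)) * (-2 / ((N : ℚ) + 2)) *
          (((k : ℚ) + 1) * N + 2 * k) / (2 * ((k : ℚ) + 1) * N - k * (k - 1))
        > -((N : ℚ) - l)) := by
    rw [Nat.cast_choose_two, Nat.cast_choose_two, hc1, hc2, gt_iff_lt, ← sub_pos]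
    have key : (((N : ℚ) + 1 - k) * ((N : ℚ) + 1 - k - 1) / 2 * (-2 / ((N : ℚ) + 1 - k)) +
        (((N : ℚ) + 1 - l) * ((N : ℚ) + 1 - l - 1) / 2 -
          ((N : ℚ) + 1 - k) * ((N : ℚ) + 1 - k - 1) / 2) * (-2 / ((N : ℚ) + 2)) *
          (((k : ℚ) + 1) * N + 2 * k) / (2 * ((k : ℚ) + 1) * N - k * (k - 1))) -
        (-((N : ℚ) - l)) =
        ((k : ℚ) - l) * (((k : ℚ) * l + l + k + 3) * N + 2 * k * l) /
          ((((N : ℚ) + 2)) * (2 * ((k : ℚ) + 1) * N - k * (k - 1))) := by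
      set D := 2 * ((k : ℚ) + 1) * N - k * (k - 1) with hDdef
      field_simp [h1.ne', h2.ne', hD.ne']
      rw [hDdef]
      ring
    rw [key]
    exact div_pos (mul_pos (by linarith) hRHS) (mul_pos h2 hD)
  exact ⟨iff_of_true hineq hRHS, hineq⟩
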